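/- For real numbers a, c with 0 ≤ a ≤ c < 1, the curve x(s) = (√(c²−a²)·s·sin(u(s)), √(c²−a²)·s·cos(u(s)), a·s) in ℝ³, where u(s) = (√(1−c²)/√(c²−a²))·ln s for s > 0, is a unit speed curve and satisfies ‖grad ρ‖ = c, where ρ(s) = ‖x(s)‖. -/

import Mathlib

/-- For 0 ≤ a < c < 1, the curve
x(s) = (√(c²−a²)·s·sin(u s), √(c²−a²)·s·cos(u s), a·s) with
u(s) = (√(1−c²)/√(c²−a²))·ln s, s > 0, is unit speed and satisfies
‖grad ρ‖ = |ρ'| = c where ρ = ‖x‖. -/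
theorem stmt4
    (a c : ℝ) (ha : 0 ≤ a) (hac : a < c) (hc : c < 1)
    (x : ℝ → EuclideanSpace ℝ (Fin 3))
    (hx : ∀ s : ℝ, x s = (WithLp.equiv 2 (Fin 3 → ℝ)).symm
      ![Real.sqrt (c ^ 2 - a ^ 2) * s *
          Real.sin (Real.sqrt (1 - c ^ 2) / Real.sqrt (c ^ 2 - a ^ 2) * Real.log s),
        Real.sqrt (c ^ 2 - a ^ 2) * s *
          Real.cos (Real.sqrt (1 - c ^ 2) / Real.sqrt (c ^ 2 - a ^ 2) * Real.log s),
        a * s]) :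
    ∀ s : ℝ, 0 < s →
      ‖deriv x s‖ = 1 ∧ |deriv (fun t => ‖x t‖) s| = c := by
  intro s hs
  set k := Real.sqrt (c ^ 2 - a ^ 2) with hkdef
  set b := Real.sqrt (1 - c ^ 2) with hbdef
  have hca : (0:ℝ) < c ^ 2 - a ^ 2 := by nlinarith
  have hc2 : (0:ℝ) < 1 - c ^ 2 := by nlinarith
  have hk : 0 < k := Real.sqrt_pos.mpr hca
  have hb : 0 < b := Real.sqrt_pos.mpr hc2
  have hk2 : k ^ 2 = c ^ 2 - a ^ 2 := Real.sq_sqrt hca.le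
  have hb2 : b ^ 2 = 1 - c ^ 2 := Real.sq_sqrt hc2.le
  have hc0 : 0 < c := lt_of_le_of_lt ha hac
  -- the angle and its derivative
  set θ : ℝ → ℝ := fun t => b / k * Real.log t with hθdef
  have hθd : HasDerivAt θ (b / k * s⁻¹) s :=
    (Real.hasDerivAt_log hs.ne').const_mul (b / k)
  -- norm of x t for t > 0
  have hnorm : ∀ t : ℝ, 0 < t → ‖x t‖ = c * t := by
    intro t ht
    rw [hx t, EuclideanSpace.norm_eq]
    have : ∑ i, ‖(WithLp.equiv 2 (Fin 3 → ℝ)).symm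
        ![k * t * Real.sin (θ t), k * t * Real.cos (θ t), a * t] i‖ ^ 2
        = (c * t) ^ 2 := by
      simp [Fin.sum_univ_three, sq_abs]
      have h := Real.sin_sq_add_cos_sq (θ t)
      linear_combination k ^ 2 * t ^ 2 * h + t ^ 2 * hk2
    rw [this, Real.sqrt_sq (by positivity)]
  -- derivative of each component
  have hsin : HasDerivAt (fun t => Real.sin (θ t)) (Real.cos (θ s) * (b / k * s⁻¹)) s :=
    (Real.hasDerivAt_sin (θ s)).comp s hθd
  have hcos : HasDerivAt (fun t => Real.cos (θ t)) (-Real.sin (θ s) * (b / k * s⁻¹)) s :=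
    (Real.hasDerivAt_cos (θ s)).comp s hθd
  have hid : HasDerivAt (fun t : ℝ => k * t) k s := by
    simpa using (hasDerivAt_id s).const_mul k
  have h1 : HasDerivAt (fun t => k * t * Real.sin (θ t))
      (k * Real.sin (θ s) + b * Real.cos (θ s)) s := by
    have := hid.mul hsin
    refine this.congr_deriv ?_
    rw [show k * s * (Real.cos (θ s) * (b / k * s⁻¹)) = (k * k⁻¹) * (s * s⁻¹) * (b * Real.cos (θ s)) by ring, mul_inv_cancel₀ hk.ne', mul_inv_cancel₀ hs.ne']
    ring
  have h2 : HasDerivAt (fun t => k * t * Real.cos (θ t))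
      (k * Real.cos (θ s) - b * Real.sin (θ s)) s := by
    have := hid.mul hcos
    refine this.congr_deriv ?_
    rw [show k * s * (-Real.sin (θ s) * (b / k * s⁻¹)) = (k * k⁻¹) * (s * s⁻¹) * (-(b * Real.sin (θ s))) by ring, mul_inv_cancel₀ hk.ne', mul_inv_cancel₀ hs.ne']
    ring
  have h3 : HasDerivAt (fun t : ℝ => a * t) a s := by
    simpa using (hasDerivAt_id s).const_mul a
  -- derivative of x
  set v : EuclideanSpace ℝ (Fin 3) := (WithLp.equiv 2 (Fin 3 → ℝ)).symm
      ![k * Real.sin (θ s) + b * Real.cos (θ s),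
        k * Real.cos (θ s) - b * Real.sin (θ s), a] with hvdef
  have hxd : HasDerivAt x v s := by
    have hg : HasDerivAt (fun t => ![k * t * Real.sin (θ t), k * t * Real.cos (θ t), a * t])
        ![k * Real.sin (θ s) + b * Real.cos (θ s),
          k * Real.cos (θ s) - b * Real.sin (θ s), a] s := by
      apply hasDerivAt_pi.2
      intro i
      fin_cases i
      · simpa using h1
      · simpa using h2
      · simpa using h3
    have hfd := ((EuclideanSpace.equiv (Fin 3) ℝ).symm.toContinuousLinearMap.hasFDerivAt).comp_hasDerivAt s hg
    have hxx : x = fun t => (EuclideanSpace.equiv (Fin 3) ℝ).symm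
        ![k * t * Real.sin (θ t), k * t * Real.cos (θ t), a * t] := by
      funext t
      rw [hx t]
      rfl
    rw [hxx]
    exact hfd
  constructor
  · rw [hxd.deriv]
    rw [hvdef, EuclideanSpace.norm_eq]
    have : ∑ i, ‖(WithLp.equiv 2 (Fin 3 → ℝ)).symm
        ![k * Real.sin (θ s) + b * Real.cos (θ s),
          k * Real.cos (θ s) - b * Real.sin (θ s), a] i‖ ^ 2 = 1 := by
      simp [Fin.sum_univ_three, sq_abs]
      have h := Real.sin_sq_add_cos_sq (θ s)
      linear_combination (k ^ 2 + b ^ 2) * h + hk2 + hb2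
    rw [this, Real.sqrt_one]
  · have heq : (fun t => ‖x t‖) =ᶠ[nhds s] fun t => c * t := by
      filter_upwards [Ioi_mem_nhds hs] with t ht
      exact hnorm t ht
    rw [heq.deriv_eq]
    have : deriv (fun t : ℝ => c * t) s = c := by
      simpa using ((hasDerivAt_id s).const_mul c).deriv
    rw [this, abs_of_pos hc0]
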